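/- Let (F, Ψ₊, Ψ₋) be a family of SU(3)-structures on M⁶ depending on q, and let φ(q) = F(q)∧dq - Ψ₋(q) with *φ(q) = ½F(q)∧F(q) + Ψ₊(q)∧dq on M⁶ × ℝ. Then dφ = 4*φ holds if and only if dΨ₋(q) = -2F(q)∧F(q), ∂_qΨ₋ = 4Ψ₊ - dF, and dΨ₊ = -½∂_q(F∧F). Moreover, the last two (evolution) equations imply that ∂_q(dΨ₋ + 2F∧F) = 0, so the nearly half flat condition is preserved in q. -/

import Mathlib

variable {A : Type*}

/-- A form on `M⁶ × ℝ` is a pair `(α, β)` of `q`-dependent forms on `M⁶`, standing for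
`α(q) + β(q) ∧ dq`.  `dProd d k` is the exterior derivative on the product
(`k` = degree of the `dq`-free part): `d(α + β∧dq) = dα + ((-1)^k ∂_qα + dβ) ∧ dq`. -/
noncomputable def dProd [NormedRing A] [NormedAlgebra ℝ A] (d : A →L[ℝ] A) (k : ℕ)
    (ω : (ℝ → A) × (ℝ → A)) : (ℝ → A) × (ℝ → A) :=
  (fun q => d (ω.1 q), fun q => ((-1 : ℝ)) ^ k • deriv ω.1 q + d (ω.2 q))

/-- Derivative of a continuous linear map composed with a differentiable function. -/
lemma clm_deriv' [NormedRing A] [NormedAlgebra ℝ A] (d : A →L[ℝ] A) {f : ℝ → A}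
    (hf : Differentiable ℝ f) (q : ℝ) :
    deriv (fun s => d (f s)) q = d (deriv f q) :=
  (d.hasFDerivAt.comp_hasDerivAt q (hf q).hasDerivAt).deriv

/-- Let `(F(q), Ψ₊(q), Ψ₋(q))` be a family of SU(3)-structures on `M⁶` and
set `φ(q) = F(q)∧dq - Ψ₋(q)` with `*φ(q) = ½F(q)∧F(q) + Ψ₊(q)∧dq` on `M⁶ × ℝ`.  Then
`dφ = 4*φ` if and only if `dΨ₋(q) = -2F(q)∧F(q)`, `∂_qΨ₋ = 4Ψ₊ - dF`, and
`dΨ₊ = -½∂_q(F∧F)`.  Moreover, the last two (evolution) equations imply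
`∂_q(dΨ₋ + 2F∧F) = 0`, so the nearly half flat condition is preserved in `q`. -/
theorem nearlyParallelG2_iff_nearlyHalfFlat_evolution [NormedRing A] [NormedAlgebra ℝ A]
    (d : A →L[ℝ] A) (F Ψp Ψm : ℝ → A)
    (hF : Differentiable ℝ F) (hΨp : Differentiable ℝ Ψp) (hΨm : Differentiable ℝ Ψm)
    (hdd : ∀ x : A, d (d x) = 0) :
    ((∀ q : ℝ,
        (dProd d 3 (fun s => -(Ψm s), fun s => F s)).1 q
          = (4 : ℝ) • (((1 : ℝ) / 2) • (F q * F q)) ∧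
        (dProd d 3 (fun s => -(Ψm s), fun s => F s)).2 q
          = (4 : ℝ) • Ψp q) ↔
      (∀ q : ℝ,
        d (Ψm q) = (-2 : ℝ) • (F q * F q) ∧
        deriv Ψm q = (4 : ℝ) • Ψp q - d (F q) ∧
        d (Ψp q) = (-(1 : ℝ) / 2) • deriv (fun s => F s * F s) q)) ∧
    ((∀ q : ℝ,
        deriv Ψm q = (4 : ℝ) • Ψp q - d (F q) ∧
        d (Ψp q) = (-(1 : ℝ) / 2) • deriv (fun s => F s * F s) q) →
      ∀ q : ℝ, deriv (fun s => d (Ψm s) + (2 : ℝ) • (F s * F s)) q = 0) := by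
  have hFF : Differentiable ℝ (fun s => F s * F s) := hF.mul hF
  constructor
  · constructor
    · intro h
      -- extract the two equations pointwise
      have h1 : ∀ q, d (Ψm q) = (-2 : ℝ) • (F q * F q) := by
        intro q
        have := (h q).1
        simp only [dProd, map_neg] at this
        have : d (Ψm q) = -((4 : ℝ) • (((1 : ℝ) / 2) • (F q * F q))) :=
          neg_eq_iff_eq_neg.mp this
        rw [this]; module
      have h2 : ∀ q, deriv Ψm q = (4 : ℝ) • Ψp q - d (F q) := by
        intro q
        have hh := (h q).2
        simp only [dProd] at hh
        have hder : deriv (fun s => -(Ψm s)) q = -deriv Ψm q := deriv.neg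
        rw [hder] at hh
        have : deriv Ψm q + d (F q) = (4 : ℝ) • Ψp q := by
          rw [← hh]; module
        linear_combination (norm := module) this
      intro q
      refine ⟨h1 q, h2 q, ?_⟩
      -- differentiate h1 in q and apply d to h2
      have hA : deriv (fun s => d (Ψm s)) q = d (deriv Ψm q) := clm_deriv' d hΨm q
      have hB : deriv (fun s => d (Ψm s)) q
          = (-2 : ℝ) • deriv (fun s => F s * F s) q := by
        have : (fun s => d (Ψm s)) = fun s => (-2 : ℝ) • (F s * F s) := funext h1
        rw [this, deriv_fun_const_smul _ (hFF q)]
      have hC : d (deriv Ψm q) = (4 : ℝ) • d (Ψp q) := by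
        rw [h2 q, map_sub, map_smul, hdd, sub_zero]
      have key : (4 : ℝ) • d (Ψp q) = (-2 : ℝ) • deriv (fun s => F s * F s) q := by
        rw [← hC, ← hA, hB]
      have := congrArg (fun x => ((1 : ℝ) / 4) • x) key
      simp only [smul_smul] at this
      rw [show ((1:ℝ)/4) * 4 = 1 by norm_num, one_smul] at this
      rw [this]; module
    · intro h q
      obtain ⟨h1, h2, _⟩ := h q
      constructor
      · simp only [dProd, map_neg, h1]; module
      · simp only [dProd, deriv.fun_neg, h2]; module
  · intro h q
    have h2 : ∀ s, deriv Ψm s = (4 : ℝ) • Ψp s - d (F s) := fun s => (h s).1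
    have h3 : ∀ s, d (Ψp s) = (-(1 : ℝ) / 2) • deriv (fun s => F s * F s) s :=
      fun s => (h s).2
    have hdm : Differentiable ℝ (fun s => d (Ψm s)) := d.differentiable.comp hΨm
    have hsm : Differentiable ℝ (fun s => (2 : ℝ) • (F s * F s)) := hFF.const_smul (2 : ℝ)
    rw [deriv_fun_add (hdm q) (hsm q), clm_deriv' d hΨm q, h2 q,
      deriv_fun_const_smul _ (hFF q), map_sub, map_smul, hdd, sub_zero]
    have hD : deriv (fun s => F s * F s) q = (-2 : ℝ) • d (Ψp q) := by
      have := congrArg (fun x => (-2 : ℝ) • x) (h3 q)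
      simp only [smul_smul] at this
      rw [show (-2:ℝ) * (-(1:ℝ)/2) = 1 by norm_num, one_smul] at this
      rw [← this]
    rw [hD]; module
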